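/- If the Sylvester tensor equation A *_M X + X *_N C = D is consistent, then for any initial tensor X^(1), the iteration of Algorithm 3.1 (in exact arithmetic) produces a solution within at most mn + 1 steps, where m = I₁⋯I_M and n = J₁⋯J_N; i.e., there exists k ≤ mn + 1 with R^(k) = 0. -/

import Mathlib

open scoped BigOperators

/-- Multi-index of shape `I₁ × ⋯ × I_M`. -/
abbrev MIdx {M : ℕ} (I : Fin M → ℕ) := (k : Fin M) → Fin (I k)

/-- Einstein product: contraction over the shared (middle) index group. -/
def eprod {α β γ : Type*} [Fintype β] (A : α → β → ℝ) (B : β → γ → ℝ) :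
    α → γ → ℝ := fun a c => ∑ b, A a b * B b c

/-- Generalized trace of a square tensor. -/
def ttrace {α : Type*} [Fintype α] (A : α → α → ℝ) : ℝ := ∑ a, A a a

/-- Transpose: swaps the two index groups. -/
def ttr {α β : Type*} (A : α → β → ℝ) : β → α → ℝ := fun b a => A a b

/-- Frobenius inner product ⟨X, Y⟩ = tr(Yᵀ * X). -/
noncomputable def frobInner {α β : Type*} [Fintype α] [Fintype β]
    (X Y : α → β → ℝ) : ℝ := ttrace (eprod (ttr Y) X)

/-- Frobenius norm of a tensor. -/
noncomputable def tnorm {α β : Type*} [Fintype α] [Fintype β]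
    (X : α → β → ℝ) : ℝ := Real.sqrt (frobInner X X)

/-- Kronecker product of tensors (blockwise). -/
def kron {α β γ δ : Type*} (A : α → β → ℝ) (B : γ → δ → ℝ) :
    α × γ → β × δ → ℝ := fun p q => A p.1 q.1 * B p.2 q.2

/-- Vec: lines up the row-group slices into a single column index. -/
def tVec {α β : Type*} (X : α → β → ℝ) : β × α → ℝ := fun p => X p.2 p.1

/-- Einstein product of a tensor with a vectorized tensor. -/
def evec {α β : Type*} [Fintype β] (A : α → β → ℝ) (x : β → ℝ) : α → ℝ :=
  fun a => ∑ b, A a b * x b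

/-- Identity tensor. -/
def idT {α : Type*} [DecidableEq α] : α → α → ℝ := fun a b => if a = b then 1 else 0
set_option linter.unusedSectionVars false

section Helpers
variable {α β : Type*} [Fintype α] [Fintype β]

lemma frobInner_eq_sum (X Y : α → β → ℝ) :
    frobInner X Y = ∑ b, ∑ a, X a b * Y a b := by
  unfold frobInner ttrace eprod ttr
  exact Finset.sum_congr rfl fun b _ => Finset.sum_congr rfl fun a _ => mul_comm _ _

lemma frobInner_comm (X Y : α → β → ℝ) : frobInner X Y = frobInner Y X := by
  simp only [frobInner_eq_sum]
  exact Finset.sum_congr rfl fun b _ => Finset.sum_congr rfl fun a _ => mul_comm _ _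

lemma frobInner_sub_left (X Y Z : α → β → ℝ) :
    frobInner (X - Y) Z = frobInner X Z - frobInner Y Z := by
  simp [frobInner_eq_sum, sub_mul, Finset.sum_sub_distrib]

lemma frobInner_add_left (X Y Z : α → β → ℝ) :
    frobInner (X + Y) Z = frobInner X Z + frobInner Y Z := by
  simp [frobInner_eq_sum, add_mul, Finset.sum_add_distrib]

lemma frobInner_smul_left (c : ℝ) (X Z : α → β → ℝ) :
    frobInner (c • X) Z = c * frobInner X Z := by
  simp [frobInner_eq_sum, Finset.mul_sum, mul_assoc]

lemma frobInner_sub_right (X Y Z : α → β → ℝ) :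
    frobInner Z (X - Y) = frobInner Z X - frobInner Z Y := by
  rw [frobInner_comm, frobInner_sub_left, frobInner_comm X Z, frobInner_comm Y Z]

lemma frobInner_add_right (X Y Z : α → β → ℝ) :
    frobInner Z (X + Y) = frobInner Z X + frobInner Z Y := by
  rw [frobInner_comm, frobInner_add_left, frobInner_comm X Z, frobInner_comm Y Z]

lemma frobInner_smul_right (c : ℝ) (X Z : α → β → ℝ) :
    frobInner Z (c • X) = c * frobInner Z X := by
  rw [frobInner_comm, frobInner_smul_left, frobInner_comm]

lemma frobInner_zero_right (Z : α → β → ℝ) : frobInner Z 0 = 0 := by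
  simp [frobInner_eq_sum]

lemma frobInner_zero_left (Z : α → β → ℝ) : frobInner 0 Z = 0 := by
  simp [frobInner_eq_sum]

lemma frobInner_self_eq_zero {X : α → β → ℝ} (h : frobInner X X = 0) : X = 0 := by
  rw [frobInner_eq_sum] at h
  funext a b
  have h1 : ∀ b' ∈ Finset.univ (α := β), (0:ℝ) ≤ ∑ a', X a' b' * X a' b' :=
    fun b' _ => Finset.sum_nonneg fun a' _ => mul_self_nonneg _
  have h2 := (Finset.sum_eq_zero_iff_of_nonneg h1).mp h b (Finset.mem_univ b)
  have h3 := (Finset.sum_eq_zero_iff_of_nonneg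
    (fun a' _ => mul_self_nonneg (X a' b))).mp h2 a (Finset.mem_univ a)
  have := mul_self_eq_zero.mp h3
  simpa using this

lemma frobInner_sum_left {ι : Type*} (s : Finset ι) (f : ι → α → β → ℝ) (Y : α → β → ℝ) :
    frobInner (∑ j ∈ s, f j) Y = ∑ j ∈ s, frobInner (f j) Y := by
  classical
  induction s using Finset.induction with
  | empty => simp [frobInner_eq_sum]
  | insert _ _ h ih => rw [Finset.sum_insert h, frobInner_add_left, ih, Finset.sum_insert h]

lemma sum_comm3 {γ δ ε : Type*} [Fintype γ] [Fintype δ] [Fintype ε] (f : γ → δ → ε → ℝ) :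
    ∑ b, ∑ a, ∑ c, f b a c = ∑ c, ∑ a, ∑ b, f b a c :=
  calc ∑ b, ∑ a, ∑ c, f b a c = ∑ a, ∑ b, ∑ c, f b a c := Finset.sum_comm
    _ = ∑ a, ∑ c, ∑ b, f b a c := Finset.sum_congr rfl fun _ _ => Finset.sum_comm
    _ = ∑ c, ∑ a, ∑ b, f b a c := Finset.sum_comm

lemma frob_adj_left (A : α → α → ℝ) (X Y : α → β → ℝ) :
    frobInner (eprod A X) Y = frobInner X (eprod (ttr A) Y) := by
  simp only [frobInner_eq_sum, eprod, ttr, Finset.sum_mul, Finset.mul_sum]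
  refine Finset.sum_congr rfl fun b _ => ?_
  rw [Finset.sum_comm]
  exact Finset.sum_congr rfl fun a' _ => Finset.sum_congr rfl fun a _ => by ring

lemma frob_adj_right (C : β → β → ℝ) (X : α → β → ℝ) (Y : α → β → ℝ) :
    frobInner (eprod X C) Y = frobInner X (eprod Y (ttr C)) := by
  simp only [frobInner_eq_sum, eprod, ttr, Finset.sum_mul, Finset.mul_sum]
  rw [sum_comm3 (fun b a b' => X a b' * C b' b * Y a b)]
  exact Finset.sum_congr rfl fun b' _ => Finset.sum_congr rfl fun a _ =>
    Finset.sum_congr rfl fun b _ => by ring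

lemma eprod_sub_right {γ : Type*} (A : α → β → ℝ) (X Y : β → γ → ℝ) :
    eprod A (X - Y) = eprod A X - eprod A Y := by
  funext a c; simp [eprod, mul_sub, Finset.sum_sub_distrib]

lemma eprod_sub_left {γ : Type*} (X Y : α → β → ℝ) (C : β → γ → ℝ) :
    eprod (X - Y) C = eprod X C - eprod Y C := by
  funext a c; simp [eprod, sub_mul, Finset.sum_sub_distrib]

lemma eprod_add_right {γ : Type*} (A : α → β → ℝ) (X Y : β → γ → ℝ) :
    eprod A (X + Y) = eprod A X + eprod A Y := by
  funext a c; simp [eprod, mul_add, Finset.sum_add_distrib]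

lemma eprod_add_left {γ : Type*} (X Y : α → β → ℝ) (C : β → γ → ℝ) :
    eprod (X + Y) C = eprod X C + eprod Y C := by
  funext a c; simp [eprod, add_mul, Finset.sum_add_distrib]

lemma eprod_smul_right {γ : Type*} (c : ℝ) (A : α → β → ℝ) (X : β → γ → ℝ) :
    eprod A (c • X) = c • eprod A X := by
  funext a d; simp [eprod, Finset.mul_sum, mul_left_comm]

lemma eprod_smul_left {γ : Type*} (c : ℝ) (X : α → β → ℝ) (C : β → γ → ℝ) :
    eprod (c • X) C = c • eprod X C := by
  funext a d; simp [eprod, Finset.mul_sum, mul_assoc]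

end Helpers

theorem algorithm_finite_termination {M N : ℕ} (I : Fin M → ℕ) (J : Fin N → ℕ)
(A : MIdx I → MIdx I → ℝ) (C : MIdx J → MIdx J → ℝ)
    (D : MIdx I → MIdx J → ℝ)
    (X R P : ℕ → MIdx I → MIdx J → ℝ)
    (hR : ∀ k, 1 ≤ k → R k = D - (eprod A (X k) + eprod (X k) C))
    (hP1 : P 1 = eprod (ttr A) (R 1) + eprod (R 1) (ttr C))
    (hX : ∀ k, 1 ≤ k →
      X (k + 1) = X k + (frobInner (R k) (R k) / frobInner (P k) (P k)) • P k)
    (hP : ∀ k, 1 ≤ k →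
      P (k + 1) = eprod (ttr A) (R (k + 1)) + eprod (R (k + 1)) (ttr C)
        + (frobInner (R (k + 1)) (R (k + 1)) / frobInner (R k) (R k)) • P k)
    (hcons : ∃ Xs : MIdx I → MIdx J → ℝ, eprod A Xs + eprod Xs C = D) :
    ∃ k, 1 ≤ k ∧ k ≤ (∏ i, I i) * (∏ j, J j) + 1 ∧ R k = 0 := by
  classical
  obtain ⟨Xs, hXs⟩ := hcons
  set K := (∏ i, I i) * (∏ j, J j) + 1 with hK
  by_contra hcon
  push_neg at hcon
  have hnz : ∀ k, 1 ≤ k → k ≤ K → R k ≠ 0 := fun k h1 h2 => hcon k h1 h2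
  -- the Sylvester operator and its adjoint
  set Lop : (MIdx I → MIdx J → ℝ) → (MIdx I → MIdx J → ℝ) :=
    fun Z => eprod A Z + eprod Z C with hLopd
  set Ls : (MIdx I → MIdx J → ℝ) → (MIdx I → MIdx J → ℝ) :=
    fun Z => eprod (ttr A) Z + eprod Z (ttr C) with hLsd
  have hadj : ∀ Z Y, frobInner (Lop Z) Y = frobInner Z (Ls Y) := by
    intro Z Y
    show frobInner (eprod A Z + eprod Z C) Y = frobInner Z (eprod (ttr A) Y + eprod Y (ttr C))
    rw [frobInner_add_left, frob_adj_left, frob_adj_right, ← frobInner_add_right]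
  have hLop_sub : ∀ Z W, Lop (Z - W) = Lop Z - Lop W := by
    intro Z W
    show eprod A (Z - W) + eprod (Z - W) C
      = (eprod A Z + eprod Z C) - (eprod A W + eprod W C)
    rw [eprod_sub_right, eprod_sub_left]
    abel
  have hLop_add : ∀ Z W, Lop (Z + W) = Lop Z + Lop W := by
    intro Z W
    show eprod A (Z + W) + eprod (Z + W) C
      = (eprod A Z + eprod Z C) + (eprod A W + eprod W C)
    rw [eprod_add_right, eprod_add_left]
    abel
  have hLop_smul : ∀ (c : ℝ) Z, Lop (c • Z) = c • Lop Z := by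
    intro c Z
    show eprod A (c • Z) + eprod (c • Z) C = c • (eprod A Z + eprod Z C)
    rw [eprod_smul_right, eprod_smul_left, smul_add]
  -- error tensors
  set E : ℕ → MIdx I → MIdx J → ℝ := fun k => Xs - X k with hEd
  have hRL : ∀ k, 1 ≤ k → R k = Lop (E k) := by
    intro k hk
    have : Lop (E k) = Lop Xs - Lop (X k) := hLop_sub _ _
    rw [this, hR k hk]
    show D - (eprod A (X k) + eprod (X k) C) = (eprod A Xs + eprod Xs C) - _
    rw [hXs]
  have hRrec : ∀ k, 1 ≤ k → R (k + 1)
      = R k - (frobInner (R k) (R k) / frobInner (P k) (P k)) • Lop (P k) := by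
    intro k hk
    have h1 : R (k + 1) = D - Lop (X (k + 1)) := hR (k + 1) (by omega)
    have h2 : R k = D - Lop (X k) := hR k hk
    rw [h1, hX k hk, hLop_add, hLop_smul, h2]
    abel
  have hErec : ∀ k, 1 ≤ k → E (k + 1)
      = E k - (frobInner (R k) (R k) / frobInner (P k) (P k)) • P k := by
    intro k hk
    show Xs - X (k + 1) = (Xs - X k) - _
    rw [hX k hk]
    abel
  -- structure of Ls (R i)
  have hLsR : ∀ i, 1 ≤ i → ∃ c : ℝ, Ls (R i) = P i - c • P (i - 1) ∧ (2 ≤ i ∨ c = 0) := by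
    intro i hi
    match i, hi with
    | 1, _ =>
      refine ⟨0, ?_, Or.inr rfl⟩
      have : Ls (R 1) = P 1 := hP1.symm
      rw [this]
      simp
    | (m + 2), _ =>
      refine ⟨frobInner (R (m + 2)) (R (m + 2)) / frobInner (R (m + 1)) (R (m + 1)), ?_,
        Or.inl (by omega)⟩
      have h2 : P (m + 1 + 1) = Ls (R (m + 1 + 1))
          + (frobInner (R (m + 1 + 1)) (R (m + 1 + 1))
            / frobInner (R (m + 1)) (R (m + 1))) • P (m + 1) := hP (m + 1) (by omega)
      have hm : m + 2 - 1 = m + 1 := rfl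
      rw [hm]
      rw [show m + 2 = m + 1 + 1 from rfl, h2]
      abel
  -- main invariant
  have key : ∀ n, 1 ≤ n → n ≤ K →
      ((∀ i, 1 ≤ i → i ≤ n → frobInner (E i) (P i) = frobInner (R i) (R i)) ∧
       (∀ i j, 1 ≤ i → i < j → j ≤ n → frobInner (R i) (R j) = 0) ∧
       (∀ i j, 1 ≤ i → i < j → j ≤ n → frobInner (P i) (P j) = 0)) := by
    intro n hn
    induction n, hn using Nat.le_induction with
    | base =>
      intro _
      refine ⟨?_, fun i j hi hij hj => by omega, fun i j hi hij hj => by omega⟩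
      intro i hi1 hi2
      have hi : i = 1 := by omega
      subst hi
      have h1 : Ls (R 1) = P 1 := hP1.symm
      rw [← h1, ← hadj, ← hRL 1 le_rfl, frobInner_comm]
    | succ n hn ih =>
      intro hnK
      obtain ⟨IH1, IH2, IH3⟩ := ih (by omega)
      have ipR_ne : ∀ i, 1 ≤ i → i ≤ K → frobInner (R i) (R i) ≠ 0 := by
        intro i h1 h2 h
        exact hnz i h1 h2 (frobInner_self_eq_zero h)
      have Pnz : ∀ i, 1 ≤ i → i ≤ n → P i ≠ 0 := by
        intro i h1 h2 hPi
        refine ipR_ne i h1 (by omega) ?_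
        rw [← IH1 i h1 h2, hPi, frobInner_zero_right]
      have ipP_ne : ∀ i, 1 ≤ i → i ≤ n → frobInner (P i) (P i) ≠ 0 := by
        intro i h1 h2 h
        exact Pnz i h1 h2 (frobInner_self_eq_zero h)
      have aP : ∀ i, 1 ≤ i → i ≤ n →
          frobInner (R i) (R i) / frobInner (P i) (P i) * frobInner (P i) (P i)
            = frobInner (R i) (R i) :=
        fun i h1 h2 => div_mul_cancel₀ _ (ipP_ne i h1 h2)
      have a_ne : ∀ i, 1 ≤ i → i ≤ n →
          frobInner (R i) (R i) / frobInner (P i) (P i) ≠ 0 :=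
        fun i h1 h2 => div_ne_zero (ipR_ne i h1 (by omega)) (ipP_ne i h1 h2)
      -- ⟨E (n+1), P n⟩ = 0
      have hEP0 : frobInner (E (n + 1)) (P n) = 0 := by
        rw [hErec n hn, frobInner_sub_left, frobInner_smul_left, IH1 n hn le_rfl,
          aP n hn le_rfl, sub_self]
      -- new (1)
      have new1 : ∀ i, 1 ≤ i → i ≤ n + 1 →
          frobInner (E i) (P i) = frobInner (R i) (R i) := by
        intro i h1 h2
        rcases Nat.lt_or_ge i (n + 1) with hlt | hge
        · exact IH1 i h1 (by omega)
        · have hi : i = n + 1 := by omega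
          subst hi
          have hPn1 : P (n + 1) = Ls (R (n + 1))
              + (frobInner (R (n + 1)) (R (n + 1)) / frobInner (R n) (R n)) • P n :=
            hP n hn
          rw [hPn1, frobInner_add_right, frobInner_smul_right, hEP0, mul_zero, add_zero,
            ← hadj, ← hRL (n + 1) (by omega), frobInner_comm]
      -- new (2): R-orthogonality up to n+1
      have new2 : ∀ i j, 1 ≤ i → i < j → j ≤ n + 1 → frobInner (R i) (R j) = 0 := by
        intro i j hi hij hj
        rcases Nat.lt_or_ge j (n + 1) with hlt | hge
        · exact IH2 i j hi hij (by omega)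
        · have hjn : j = n + 1 := by omega
          subst hjn
          have hin : i ≤ n := by omega
          rw [hRrec n hn, frobInner_sub_right, frobInner_smul_right]
          have hadj' : frobInner (R i) (Lop (P n)) = frobInner (P n) (Ls (R i)) := by
            rw [frobInner_comm, hadj]
          rcases Nat.lt_or_ge i n with hilt | hige
          · -- i < n
            obtain ⟨c, hc, hc2⟩ := hLsR i hi
            have t1 : frobInner (P n) (P i) = 0 := by
              rw [frobInner_comm]; exact IH3 i n hi hilt le_rfl
            have t2 : c * frobInner (P n) (P (i - 1)) = 0 := by
              rcases hc2 with h2 | rfl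
              · rw [frobInner_comm, IH3 (i - 1) n (by omega) (by omega) le_rfl, mul_zero]
              · rw [zero_mul]
            rw [hadj', hc, frobInner_sub_right, frobInner_smul_right, t1, t2,
              IH2 i n hi hilt le_rfl]
            ring
          · -- i = n
            have hieq : i = n := by omega
            subst hieq
            obtain ⟨c, hc, hc2⟩ := hLsR i hi
            have t2 : c * frobInner (P i) (P (i - 1)) = 0 := by
              rcases hc2 with h2 | rfl
              · rw [frobInner_comm, IH3 (i - 1) i (by omega) (by omega) le_rfl, mul_zero]
              · rw [zero_mul]
            rw [hadj', hc, frobInner_sub_right, frobInner_smul_right, t2, sub_zero,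
              aP i hi le_rfl, sub_self]
      -- new (3): P-orthogonality up to n+1
      have new3 : ∀ i j, 1 ≤ i → i < j → j ≤ n + 1 → frobInner (P i) (P j) = 0 := by
        intro i j hi hij hj
        rcases Nat.lt_or_ge j (n + 1) with hlt | hge
        · exact IH3 i j hi hij (by omega)
        · have hjn : j = n + 1 := by omega
          subst hjn
          have hin : i ≤ n := by omega
          have hPn1 : P (n + 1) = Ls (R (n + 1))
              + (frobInner (R (n + 1)) (R (n + 1)) / frobInner (R n) (R n)) • P n :=
            hP n hn
          -- key: a i * ⟨Lop (P i), R (n+1)⟩ = ⟨R i, R (n+1)⟩ - ⟨R (i+1), R (n+1)⟩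
          have h6 : (frobInner (R i) (R i) / frobInner (P i) (P i)) • Lop (P i)
              = R i - R (i + 1) := by
            rw [hRrec i hi]; abel
          have h7 : (frobInner (R i) (R i) / frobInner (P i) (P i))
              * frobInner (Lop (P i)) (R (n + 1))
              = frobInner (R i) (R (n + 1)) - frobInner (R (i + 1)) (R (n + 1)) := by
            rw [← frobInner_smul_left, h6, frobInner_sub_left]
          have hRi : frobInner (R i) (R (n + 1)) = 0 := new2 i (n + 1) hi (by omega) le_rfl
          have hadj2 : frobInner (P i) (Ls (R (n + 1))) = frobInner (Lop (P i)) (R (n + 1)) :=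
            (hadj _ _).symm
          rcases Nat.lt_or_ge i n with hilt | hige
          · -- i < n
            have hRi1 : frobInner (R (i + 1)) (R (n + 1)) = 0 :=
              new2 (i + 1) (n + 1) (by omega) (by omega) le_rfl
            have h8 : frobInner (Lop (P i)) (R (n + 1)) = 0 := by
              have := h7
              rw [hRi, hRi1, sub_self] at this
              exact (mul_eq_zero.mp this).resolve_left (a_ne i hi (by omega))
            have t1 : frobInner (P i) (P n) = 0 := IH3 i n hi hilt le_rfl
            rw [hPn1, frobInner_add_right, frobInner_smul_right, hadj2, h8, t1, mul_zero,
              add_zero]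
          · -- i = n
            have hieq : i = n := by omega
            subst hieq
            have h8 : frobInner (R i) (R i) / frobInner (P i) (P i)
                * frobInner (Lop (P i)) (R (i + 1))
                = -frobInner (R (i + 1)) (R (i + 1)) := by
              rw [h7, hRi]; ring
            rw [hPn1, frobInner_add_right, frobInner_smul_right, hadj2]
            have hPPne := ipP_ne i hi le_rfl
            have hRRne := ipR_ne i hi (by omega)
            rw [div_mul_eq_mul_div, div_eq_iff hPPne] at h8
            field_simp
            linarith [h8]
      exact ⟨new1, new2, new3⟩
  -- extract orthogonality of the residuals
  obtain ⟨_, orth, _⟩ := key K (by omega) le_rfl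
  have ipR_ne : ∀ i, 1 ≤ i → i ≤ K → frobInner (R i) (R i) ≠ 0 := by
    intro i h1 h2 h
    exact hnz i h1 h2 (frobInner_self_eq_zero h)
  set v : Fin K → (MIdx I → MIdx J → ℝ) := fun i => R (i.1 + 1) with hv
  have hvo : ∀ i j : Fin K, i ≠ j → frobInner (v i) (v j) = 0 := by
    intro i j hij
    rcases Nat.lt_or_ge i.1 j.1 with h | h
    · exact orth (i.1 + 1) (j.1 + 1) (by omega) (by omega) (by have := j.2; omega)
    · have h' : j.1 < i.1 := by
        rcases Nat.lt_or_ge j.1 i.1 with h'' | h''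
        · exact h''
        · exact absurd (Fin.ext (by omega)) hij
      rw [frobInner_comm]
      exact orth (j.1 + 1) (i.1 + 1) (by omega) (by omega) (by have := i.2; omega)
  have li : LinearIndependent ℝ v := by
    rw [linearIndependent_iff']
    intro s g hsum i hi
    have h0 : frobInner (∑ j ∈ s, g j • v j) (v i) = 0 := by
      rw [hsum, frobInner_zero_left]
    rw [frobInner_sum_left] at h0
    have h1 : ∑ j ∈ s, frobInner (g j • v j) (v i) = g i * frobInner (v i) (v i) := by
      rw [Finset.sum_eq_single i]
      · rw [frobInner_smul_left]
      · intro j _ hji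
        rw [frobInner_smul_left, hvo j i hji, mul_zero]
      · intro h
        exact absurd hi h
    rw [h1] at h0
    have hne : frobInner (v i) (v i) ≠ 0 :=
      ipR_ne (i.1 + 1) (by omega) (by have := i.2; omega)
    exact (mul_eq_zero.mp h0).resolve_right hne
  have hcard := li.fintype_card_le_finrank
  have hfr : Module.finrank ℝ (MIdx I → MIdx J → ℝ) = (∏ i, I i) * (∏ j, J j) := by
    rw [Module.finrank_pi_fintype ℝ]
    simp [Module.finrank_pi, Fintype.card_pi, Finset.sum_const, smul_eq_mul]
  rw [hfr, Fintype.card_fin] at hcard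
  omega
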